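/- arXiv:2002.09742 — 4 statements merged into one kernel-verified Lean document; each statement's English description precedes it below -/
import Mathlib

section
/- Let d be a positive integer, α ∈ (0,2), β > 0, s ∈ [0,d], and let μ be a nonzero finite Borel measure on ℝ^d with compact support S satisfying condition (F2)-s with constant C̲. Then there is a constant c₀ > 0, depending only on α and d, such that for every k > 0, every t > 0 and every x ∈ S, h_k(t,x) ≥ C̲ · c₀ · k · t^{-1/β}. -/
open MeasureTheory Metric Set

/-- The profile function `W(r) = log(e + r²)/(1 + r^{d+α})`. -/
noncomputable def Wfn (d : ℕ) (α r : ℝ) : ℝ :=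
  Real.log (Real.exp 1 + r ^ 2) / (1 + r ^ ((d : ℝ) + α))

/-- `w_t(x) = t^{-1/β}(1 + t^{-s/α}) W(t^{-1/α}|x|)`. -/
noncomputable def wfn (d : ℕ) (α β s t : ℝ) (x : EuclideanSpace ℝ (Fin d)) : ℝ :=
  t ^ (-(1:ℝ)/β) * (1 + t ^ (-s/α)) * Wfn d α (t ^ (-(1:ℝ)/α) * ‖x‖)

/-- `h_k(t,x) = k ∫ w_t(x - y) dμ(y)`. -/
noncomputable def hfn (d : ℕ) (α β s : ℝ) (μ : Measure (EuclideanSpace ℝ (Fin d)))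
    (k t : ℝ) (x : EuclideanSpace ℝ (Fin d)) : ℝ :=
  k * ∫ y, wfn d α β s t (x - y) ∂μ

/-- `S` is the closed support of `μ`. -/
def IsSupportOf (d : ℕ) (μ : Measure (EuclideanSpace ℝ (Fin d)))
    (S : Set (EuclideanSpace ℝ (Fin d))) : Prop :=
  IsClosed S ∧ μ Sᶜ = 0 ∧ ∀ x ∈ S, ∀ r : ℝ, 0 < r → 0 < μ (ball x r)

/-- Condition (F2)-s with constant `Cund` on the set `S`. -/
def IsF2 (d : ℕ) (μ : Measure (EuclideanSpace ℝ (Fin d)))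
    (S : Set (EuclideanSpace ℝ (Fin d))) (Cund s : ℝ) : Prop :=
  ∀ x ∈ S, ∀ r : ℝ, 0 < r → r ≤ 1 →
    ENNReal.ofReal (Cund * r ^ s) ≤ μ (closedBall x r)

/-- Lower bound `W(r) ≥ 1/2` for `r ∈ [0,1]`. -/
lemma Wfn_half (d : ℕ) {α r : ℝ} (hα : 0 < α) (h0 : 0 ≤ r) (h1 : r ≤ 1) :
    (1/2 : ℝ) ≤ Wfn d α r := by
  unfold Wfn
  have hp : (0:ℝ) ≤ (d:ℝ) + α := add_nonneg (Nat.cast_nonneg d) hα.le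
  have hnn : 0 ≤ r ^ ((d:ℝ) + α) := Real.rpow_nonneg h0 _
  have hden0 : 0 < 1 + r ^ ((d:ℝ) + α) := by linarith
  rw [le_div_iff₀ hden0]
  have hle : r ^ ((d:ℝ) + α) ≤ 1 := Real.rpow_le_one h0 h1 hp
  have hlog : 1 ≤ Real.log (Real.exp 1 + r ^ 2) := by
    have h2 : Real.exp 1 ≤ Real.exp 1 + r ^ 2 := by nlinarith [sq_nonneg r]
    calc (1:ℝ) = Real.log (Real.exp 1) := (Real.log_exp 1).symm
      _ ≤ Real.log (Real.exp 1 + r ^ 2) := Real.log_le_log (Real.exp_pos 1) h2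
  linarith

/-- Nonnegativity of `W` on `[0,∞)`. -/
lemma Wfn_nonneg (d : ℕ) {α r : ℝ} (hα : 0 < α) (h0 : 0 ≤ r) : 0 ≤ Wfn d α r := by
  unfold Wfn
  have hnn : 0 ≤ r ^ ((d:ℝ) + α) := Real.rpow_nonneg h0 _
  have hlog : 0 ≤ Real.log (Real.exp 1 + r ^ 2) := by
    have h2 : Real.exp 1 ≤ Real.exp 1 + r ^ 2 := by nlinarith [sq_nonneg r]
    have : (1:ℝ) = Real.log (Real.exp 1) := (Real.log_exp 1).symm
    nlinarith [Real.log_le_log (Real.exp_pos 1) h2]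
  exact div_nonneg hlog (by linarith)

/-- Continuity of `y ↦ w_t(x - y)` for `t > 0`. -/
lemma wfn_cont (d : ℕ) {α t : ℝ} (hα : 0 < α) (ht : 0 < t) (β s : ℝ)
    (x : EuclideanSpace ℝ (Fin d)) :
    Continuous fun y => wfn d α β s t (x - y) := by
  have hp : (0:ℝ) ≤ (d:ℝ) + α := add_nonneg (Nat.cast_nonneg d) hα.le
  have hg : Continuous fun y : EuclideanSpace ℝ (Fin d) => t ^ (-(1:ℝ)/α) * ‖x - y‖ :=
    continuous_const.mul ((continuous_const.sub continuous_id).norm)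
  have hW : ContinuousOn (Wfn d α) (Ici 0) := by
    unfold Wfn
    apply ContinuousOn.div
    · apply Continuous.continuousOn
      rw [continuous_iff_continuousAt]; intro r
      exact (Real.continuousAt_log (by positivity)).comp
        ((continuous_const.add (continuous_pow 2)).continuousAt)
    · exact (continuous_const.add (Real.continuous_rpow_const hp)).continuousOn
    · intro r hr
      have hnn : 0 ≤ r ^ ((d:ℝ) + α) := Real.rpow_nonneg hr _
      exact ne_of_gt (by linarith)
  have hc : Continuous fun y => Wfn d α (t ^ (-(1:ℝ)/α) * ‖x - y‖) :=
    hW.comp_continuous hg fun y =>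
      mul_nonneg (Real.rpow_nonneg ht.le _) (norm_nonneg _)
  unfold wfn
  exact continuous_const.mul hc

/-- On the support, `h_k(t,x) ≥ C̲ c₀ k t^{-1/β}`. -/
theorem stmt_1 (d : ℕ) (hd : 0 < d) (α β s : ℝ) (hα : α ∈ Ioo (0:ℝ) 2)
    (hβ : 0 < β) (hs : s ∈ Icc (0:ℝ) (d:ℝ))
    (μ : Measure (EuclideanSpace ℝ (Fin d))) [IsFiniteMeasure μ] (hμ : μ ≠ 0)
    (S : Set (EuclideanSpace ℝ (Fin d))) (hScpt : IsCompact S)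
    (hSsupp : IsSupportOf d μ S)
    (Cund : ℝ) (hCund : 0 < Cund) (hF2 : IsF2 d μ S Cund s) :
    ∃ c₀ > 0, ∀ k > (0:ℝ), ∀ t > (0:ℝ), ∀ x ∈ S,
      Cund * c₀ * k * t ^ (-(1:ℝ)/β) ≤ hfn d α β s μ k t x := by
  obtain ⟨hα0, hα2⟩ := hα
  refine ⟨1/2, by norm_num, ?_⟩
  intro k hk t ht x hx
  set r : ℝ := min (t ^ ((1:ℝ)/α)) 1 with hrdef
  have hr0 : 0 < r := lt_min (Real.rpow_pos_of_pos ht _) one_pos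
  have hr1 : r ≤ 1 := min_le_right _ _
  have hsα : 0 ≤ s / α := div_nonneg hs.1 hα0.le
  -- `t^{-1/α} r ≤ 1`
  have htr : t ^ (-(1:ℝ)/α) * r ≤ 1 := by
    have h1 : t ^ (-(1:ℝ)/α) * r ≤ t ^ (-(1:ℝ)/α) * t ^ ((1:ℝ)/α) :=
      mul_le_mul_of_nonneg_left (min_le_left _ _) (Real.rpow_nonneg ht.le _)
    have h2 : t ^ (-(1:ℝ)/α) * t ^ ((1:ℝ)/α) = 1 := by
      rw [← Real.rpow_add ht, neg_div, neg_add_cancel, Real.rpow_zero]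
    linarith
  -- `(1 + t^{-s/α}) r^s ≥ 1`
  have hfac : (1:ℝ) ≤ (1 + t ^ (-s/α)) * r ^ s := by
    rcases le_total t 1 with h1 | h1
    · have hre : r = t ^ ((1:ℝ)/α) :=
        min_eq_left (Real.rpow_le_one ht.le h1 (by positivity))
      have e1 : r ^ s = t ^ (s/α) := by
        rw [hre, ← Real.rpow_mul ht.le, one_div, inv_mul_eq_div]
      have e2 : t ^ (-s/α) * t ^ (s/α) = 1 := by
        rw [← Real.rpow_add ht, neg_div, neg_add_cancel, Real.rpow_zero]
      have hpos : 0 < t ^ (s/α) := Real.rpow_pos_of_pos ht _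
      rw [e1]; nlinarith
    · have hre : r = 1 := min_eq_right (Real.one_le_rpow h1 (by positivity))
      have := Real.rpow_nonneg ht.le (-s/α)
      rw [hre, Real.one_rpow]; linarith
  -- continuity and integrability
  have hcont : Continuous fun y => wfn d α β s t (x - y) := wfn_cont d hα0 ht β s x
  have hμS : μ.restrict S = μ :=
    Measure.restrict_eq_self_of_ae_mem (mem_ae_iff.mpr hSsupp.2.1)
  have hint : Integrable (fun y => wfn d α β s t (x - y)) μ := by
    rw [← hμS]
    exact hcont.continuousOn.integrableOn_compact hScpt
  have hnonneg : ∀ y, 0 ≤ wfn d α β s t (x - y) := by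
    intro y
    unfold wfn
    have h1 : (0:ℝ) ≤ t ^ (-(1:ℝ)/β) := Real.rpow_nonneg ht.le _
    have h2 : (0:ℝ) ≤ t ^ (-s/α) := Real.rpow_nonneg ht.le _
    exact mul_nonneg (mul_nonneg h1 (by linarith))
      (Wfn_nonneg d hα0 (mul_nonneg (Real.rpow_nonneg ht.le _) (norm_nonneg _)))
  -- lower bound on the closed ball
  have hWlb : ∀ y ∈ closedBall x r,
      t ^ (-(1:ℝ)/β) * (1 + t ^ (-s/α)) * (1/2) ≤ wfn d α β s t (x - y) := by
    intro y hy
    have hdist : ‖x - y‖ ≤ r := by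
      rw [← dist_eq_norm, dist_comm]
      exact mem_closedBall.mp hy
    have harg1 : t ^ (-(1:ℝ)/α) * ‖x - y‖ ≤ 1 := by
      have := mul_le_mul_of_nonneg_left hdist (Real.rpow_nonneg ht.le (-(1:ℝ)/α))
      linarith
    have harg0 : 0 ≤ t ^ (-(1:ℝ)/α) * ‖x - y‖ :=
      mul_nonneg (Real.rpow_nonneg ht.le _) (norm_nonneg _)
    unfold wfn
    have hWh := Wfn_half d hα0 harg0 harg1
    have hfpos : (0:ℝ) ≤ t ^ (-(1:ℝ)/β) * (1 + t ^ (-s/α)) := by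
      have h1 : (0:ℝ) ≤ t ^ (-(1:ℝ)/β) := Real.rpow_nonneg ht.le _
      have h2 : (0:ℝ) ≤ t ^ (-s/α) := Real.rpow_nonneg ht.le _
      exact mul_nonneg h1 (by linarith)
    exact mul_le_mul_of_nonneg_left hWh hfpos
  have key : t ^ (-(1:ℝ)/β) * (1 + t ^ (-s/α)) * (1/2) * (μ (closedBall x r)).toReal
      ≤ ∫ y in closedBall x r, wfn d α β s t (x - y) ∂μ :=
    setIntegral_ge_of_const_le_real measurableSet_closedBall (measure_ne_top μ _) hWlb
      hint.integrableOn
  have hμB : Cund * r ^ s ≤ (μ (closedBall x r)).toReal := by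
    have h := hF2 x hx r hr0 hr1
    have h2 := ENNReal.toReal_mono (measure_ne_top μ _) h
    rwa [ENNReal.toReal_ofReal (by positivity)] at h2
  have hIB : ∫ y in closedBall x r, wfn d α β s t (x - y) ∂μ
      ≤ ∫ y, wfn d α β s t (x - y) ∂μ :=
    setIntegral_le_integral hint (Filter.Eventually.of_forall hnonneg)
  have hP : (0:ℝ) < t ^ (-(1:ℝ)/β) := Real.rpow_pos_of_pos ht _
  have hA : (0:ℝ) ≤ t ^ (-s/α) := Real.rpow_nonneg ht.le _
  have hrs : (0:ℝ) < r ^ s := Real.rpow_pos_of_pos hr0 _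
  unfold hfn
  calc Cund * (1/2) * k * t ^ (-(1:ℝ)/β)
      = k * (t ^ (-(1:ℝ)/β) * Cund * (1/2) * 1) := by ring
    _ ≤ k * (t ^ (-(1:ℝ)/β) * Cund * (1/2) * ((1 + t ^ (-s/α)) * r ^ s)) := by
        have h1 : (0:ℝ) ≤ t ^ (-(1:ℝ)/β) * Cund * (1/2) := by positivity
        have := mul_le_mul_of_nonneg_left hfac h1
        nlinarith
    _ = k * (t ^ (-(1:ℝ)/β) * (1 + t ^ (-s/α)) * (1/2) * (Cund * r ^ s)) := by ring
    _ ≤ k * (t ^ (-(1:ℝ)/β) * (1 + t ^ (-s/α)) * (1/2) * (μ (closedBall x r)).toReal) := by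
        have h1 : (0:ℝ) ≤ t ^ (-(1:ℝ)/β) * (1 + t ^ (-s/α)) * (1/2) := by positivity
        have := mul_le_mul_of_nonneg_left hμB h1
        nlinarith
    _ ≤ k * ∫ y in closedBall x r, wfn d α β s t (x - y) ∂μ :=
        mul_le_mul_of_nonneg_left key hk.le
    _ ≤ k * ∫ y, wfn d α β s t (x - y) ∂μ :=
        mul_le_mul_of_nonneg_left hIB hk.le
end

section
/- Let d be a positive integer, α ∈ (0,2), β > 0, s ∈ [0,d], and let μ be a nonzero finite Borel measure on ℝ^d with compact support S satisfying condition (F2)-s with constant C̲. Then there is a constant c₁ > 0, depending only on α and d, such that for every k > 0, every t > 0 and every x ∈ ℝ^d, h_k(t,x) ≥ C̲ · c₁ · k · t^{-1/β} · W(t^{-1/α} d(x,S)). -/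
open MeasureTheory Metric Set Filter Topology

lemma my_Wfn_pos (d : ℕ) {α r : ℝ} (hα : 0 < α) (hr : 0 ≤ r) : 0 < Wfn d α r := by
  have h1 : (0:ℝ) < 1 + r ^ ((d:ℝ) + α) := by
    have := Real.rpow_nonneg hr ((d:ℝ) + α); linarith
  have h2 : (0:ℝ) < Real.log (Real.exp 1 + r ^ 2) := by
    have h3 : Real.exp 1 ≤ Real.exp 1 + r ^ 2 := by nlinarith
    have := Real.log_le_log (Real.exp_pos 1) h3
    rw [Real.log_exp] at this; linarith
  exact div_pos h2 h1

lemma my_Wfn_comp (d : ℕ) {α r r' D : ℝ} (hα : 0 < α) (hr : 0 ≤ r) (hD : 0 ≤ D)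
    (h1 : r ≤ r') (h2 : r' ≤ r + D) :
    Wfn d α r ≤ 2 ^ ((d:ℝ) + α) * (1 + D ^ ((d:ℝ) + α)) * Wfn d α r' := by
  set p : ℝ := (d:ℝ) + α with hpdef
  have hp : 0 < p := by positivity
  have hr' : 0 ≤ r' := le_trans hr h1
  have hrp : 0 ≤ r ^ p := Real.rpow_nonneg hr p
  have hDp : 0 ≤ D ^ p := Real.rpow_nonneg hD p
  have h2p : (1:ℝ) ≤ 2 ^ p := Real.one_le_rpow one_le_two hp.le
  -- r'^p ≤ 2^p (r^p + D^p)
  have hkey : r' ^ p ≤ 2 ^ p * (r ^ p + D ^ p) := by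
    have hmax : r' ≤ 2 * max r D := by
      have := le_max_left r D; have := le_max_right r D; linarith
    calc r' ^ p ≤ (2 * max r D) ^ p := Real.rpow_le_rpow hr' hmax hp.le
      _ = 2 ^ p * (max r D) ^ p := Real.mul_rpow (by norm_num) (le_max_of_le_left hr)
      _ ≤ 2 ^ p * (r ^ p + D ^ p) := by
          apply mul_le_mul_of_nonneg_left _ (by positivity)
          rcases max_cases r D with ⟨h, _⟩ | ⟨h, _⟩ <;> rw [h] <;> linarith
  have hden : (0:ℝ) < 1 + r ^ p := by linarith
  have hden' : (0:ℝ) < 1 + r' ^ p := by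
    have := Real.rpow_nonneg hr' p; linarith
  have hLpos : 0 < Real.log (Real.exp 1 + r ^ 2) := by
    have h3 : Real.exp 1 ≤ Real.exp 1 + r ^ 2 := by nlinarith
    have := Real.log_le_log (Real.exp_pos 1) h3
    rw [Real.log_exp] at this; linarith
  have hL : Real.log (Real.exp 1 + r ^ 2) ≤ Real.log (Real.exp 1 + r' ^ 2) := by
    apply Real.log_le_log (by positivity); nlinarith
  rw [Wfn, Wfn, ← hpdef, mul_div_assoc', div_le_div_iff₀ hden hden']
  have hden2 : 1 + r' ^ p ≤ 2 ^ p * (1 + D ^ p) * (1 + r ^ p) := by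
    nlinarith [hkey, mul_nonneg (mul_nonneg (by positivity : (0:ℝ) ≤ 2 ^ p) hDp) hrp]
  nlinarith [mul_le_mul_of_nonneg_left hden2 hLpos.le,
    mul_le_mul_of_nonneg_right hL (by positivity : (0:ℝ) ≤ 2 ^ p * (1 + D ^ p) * (1 + r ^ p))]

lemma my_Wfn_le (d : ℕ) {α r : ℝ} (hα : 0 < α) (hr : 0 ≤ r) :
    Wfn d α r ≤ 2 / ((d:ℝ)+α) * 2 ^ (((d:ℝ)+α)/2) * (Real.exp 1 ^ (((d:ℝ)+α)/2) + 1) := by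
  set p : ℝ := (d:ℝ) + α with hpdef
  have hp : 0 < p := by positivity
  have hrp : 0 ≤ r ^ p := Real.rpow_nonneg hr p
  have hX : (0:ℝ) < Real.exp 1 + r ^ 2 := by positivity
  have hep : (0:ℝ) ≤ Real.exp 1 ^ (p/2) := Real.rpow_nonneg (Real.exp_pos 1).le _
  have hlog : Real.log (Real.exp 1 + r ^ 2) ≤ 2 / p * (Real.exp 1 + r ^ 2) ^ (p/2) := by
    have h1 : Real.log ((Real.exp 1 + r^2) ^ (p/2)) = (p/2) * Real.log (Real.exp 1 + r^2) :=
      Real.log_rpow hX _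
    have h2 : Real.log ((Real.exp 1 + r^2) ^ (p/2)) ≤ (Real.exp 1 + r^2) ^ (p/2) - 1 :=
      Real.log_le_sub_one_of_pos (Real.rpow_pos_of_pos hX _)
    rw [h1] at h2
    calc Real.log (Real.exp 1 + r^2)
        = (2/p) * ((p/2) * Real.log (Real.exp 1 + r^2)) := by field_simp
      _ ≤ 2/p * (Real.exp 1 + r^2)^(p/2) := by
          apply mul_le_mul_of_nonneg_left _ (by positivity); linarith
  have hr2p : (r ^ 2 : ℝ) ^ (p/2) = r ^ p := by
    rw [← Real.rpow_natCast r 2, ← Real.rpow_mul hr]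
    congr 1; ring
  have hXb : (Real.exp 1 + r ^ 2) ^ (p/2) ≤ 2 ^ (p/2) * (Real.exp 1 ^ (p/2) + r ^ p) := by
    have hm : Real.exp 1 + r^2 ≤ 2 * max (Real.exp 1) (r^2) := by
      have := le_max_left (Real.exp 1) (r^2)
      have := le_max_right (Real.exp 1) (r^2); linarith
    calc (Real.exp 1 + r^2)^(p/2) ≤ (2 * max (Real.exp 1) (r^2))^(p/2) :=
          Real.rpow_le_rpow hX.le hm (by positivity)
      _ = 2^(p/2) * (max (Real.exp 1) (r^2))^(p/2) :=
          Real.mul_rpow (by norm_num) (le_max_of_le_left (Real.exp_pos 1).le)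
      _ ≤ 2^(p/2) * (Real.exp 1 ^ (p/2) + r ^ p) := by
          apply mul_le_mul_of_nonneg_left _ (by positivity)
          rcases max_cases (Real.exp 1) (r^2) with ⟨h, _⟩ | ⟨h, _⟩ <;> rw [h]
          · linarith
          · rw [hr2p]; linarith
  have hden : (0:ℝ) < 1 + r ^ p := by linarith
  rw [Wfn, ← hpdef, div_le_iff₀ hden]
  have h2p2 : (0:ℝ) ≤ 2 ^ (p/2) := Real.rpow_nonneg (by norm_num) _
  nlinarith [mul_le_mul_of_nonneg_left hXb (by positivity : (0:ℝ) ≤ 2/p),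
    mul_nonneg (mul_nonneg (by positivity : (0:ℝ) ≤ 2/p) h2p2) (mul_nonneg hep hrp),
    mul_nonneg (by positivity : (0:ℝ) ≤ 2/p) h2p2,
    mul_nonneg (mul_nonneg (by positivity : (0:ℝ) ≤ 2/p) h2p2) hrp]

lemma my_cont (d : ℕ) {α : ℝ} (hα : 0 < α) {a : ℝ} (ha : 0 ≤ a) (x : EuclideanSpace ℝ (Fin d)) :
    Continuous (fun y : EuclideanSpace ℝ (Fin d) => Wfn d α (a * ‖x - y‖)) := by
  have hp : (0:ℝ) < (d:ℝ) + α := by positivity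
  have hb : Continuous (fun y : EuclideanSpace ℝ (Fin d) => a * ‖x - y‖) :=
    continuous_const.mul ((continuous_const.sub continuous_id).norm)
  have hrpow : Continuous (fun r : ℝ => r ^ ((d:ℝ)+α)) := by
    rw [continuous_iff_continuousAt]
    intro r
    exact Real.continuousAt_rpow_const r _ (Or.inr hp.le)
  have hnum : Continuous (fun y : EuclideanSpace ℝ (Fin d) =>
      Real.log (Real.exp 1 + (a * ‖x - y‖) ^ 2)) := by
    rw [continuous_iff_continuousAt]; intro y
    exact (Real.continuousAt_log (by positivity)).comp
      ((continuous_const.add (hb.pow 2)).continuousAt)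
  simp only [Wfn]
  apply hnum.div (continuous_const.add (hrpow.comp hb))
  intro y
  have h0 : 0 ≤ (a * ‖x - y‖) ^ ((d:ℝ)+α) :=
    Real.rpow_nonneg (mul_nonneg ha (norm_nonneg _)) _
  exact ne_of_gt (by simp only [Pi.add_apply, Function.comp_apply]; linarith)

/-- Global lower bound on `h_k`:
`h_k(t,x) ≥ C̲ c₁ k t^{-1/β} W(t^{-1/α} d(x,S))` for an (F2)-s measure with compact support. -/

theorem stmt_4 (d : ℕ) (hd : 0 < d) (α β s : ℝ) (hα : α ∈ Ioo (0:ℝ) 2)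
    (hβ : 0 < β) (hs : s ∈ Icc (0:ℝ) (d:ℝ))
    (μ : Measure (EuclideanSpace ℝ (Fin d))) [IsFiniteMeasure μ] (hμ : μ ≠ 0)
    (S : Set (EuclideanSpace ℝ (Fin d))) (hScpt : IsCompact S)
    (hSsupp : IsSupportOf d μ S)
    (Cund : ℝ) (hCund : 0 < Cund) (hF2 : IsF2 d μ S Cund s) :
    ∃ c₁ > 0, ∀ k > (0:ℝ), ∀ t > (0:ℝ), ∀ x : EuclideanSpace ℝ (Fin d),
      Cund * c₁ * k * t ^ (-(1:ℝ)/β) * Wfn d α (t ^ (-(1:ℝ)/α) * infDist x S) ≤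
        hfn d α β s μ k t x := by
  obtain ⟨hα0, hα2⟩ := hα
  obtain ⟨hScl, hSnull, hSball⟩ := hSsupp
  set p : ℝ := (d:ℝ) + α with hpdef
  have hp : 0 < p := by positivity
  have hc₁ : (0:ℝ) < (2 ^ p * 2)⁻¹ := by
    have : (0:ℝ) < 2 ^ p := Real.rpow_pos_of_pos two_pos p
    positivity
  refine ⟨(2 ^ p * 2)⁻¹, hc₁, ?_⟩
  intro k hk t ht x
  set a : ℝ := t ^ (-(1:ℝ)/α) with hadef
  have ha : 0 < a := Real.rpow_pos_of_pos ht _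
  set ρ : ℝ := infDist x S with hρdef
  have hρ0 : 0 ≤ ρ := infDist_nonneg
  have hSne : S.Nonempty := by
    rcases Set.eq_empty_or_nonempty S with h | h
    · exfalso; apply hμ
      have he : Sᶜ = Set.univ := by rw [h]; simp
      have : μ Set.univ = 0 := by rw [← he]; exact hSnull
      exact Measure.measure_univ_eq_zero.mp this
    · exact h
  obtain ⟨x₀, hx₀S, hx₀d⟩ := hScpt.exists_infDist_eq_dist hSne x
  set r₀ : ℝ := min (1/a) 1 with hr₀def
  have hr₀pos : 0 < r₀ := lt_min (by positivity) one_pos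
  have hr₀le1 : r₀ ≤ 1 := min_le_right _ _
  have har₀ : a * r₀ ≤ 1 := by
    calc a * r₀ ≤ a * (1/a) := mul_le_mul_of_nonneg_left (min_le_left _ _) ha.le
      _ = 1 := by field_simp
  set g : EuclideanSpace ℝ (Fin d) → ℝ := fun y => Wfn d α (a * ‖x - y‖) with hgdef
  have hgnn : ∀ y, 0 ≤ g y :=
    fun y => (my_Wfn_pos d hα0 (mul_nonneg ha.le (norm_nonneg _))).le
  have hgcont : Continuous g := my_cont d hα0 ha.le x
  have hgint : Integrable g μ := by
    apply Integrable.mono'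
      (integrable_const (2 / p * 2 ^ (p/2) * (Real.exp 1 ^ (p/2) + 1)))
      hgcont.aestronglyMeasurable
    filter_upwards with y
    rw [Real.norm_of_nonneg (hgnn y)]
    exact my_Wfn_le d hα0 (mul_nonneg ha.le (norm_nonneg _))
  set B := closedBall x₀ r₀ ∩ S with hBdef
  have hBmeas : MeasurableSet B := measurableSet_closedBall.inter hScl.measurableSet
  have hμB : ENNReal.ofReal (Cund * r₀ ^ s) ≤ μ B := by
    rw [hBdef, measure_inter_conull hSnull]
    exact hF2 x₀ hx₀S r₀ hr₀pos hr₀le1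
  have hμBr : Cund * r₀ ^ s ≤ (μ B).toReal := by
    have h1 : μ B ≠ ⊤ := measure_ne_top μ B
    have h2 := ENNReal.toReal_mono h1 hμB
    rwa [ENNReal.toReal_ofReal
      (mul_nonneg hCund.le (Real.rpow_nonneg hr₀pos.le s))] at h2
  have hW : 0 < Wfn d α (a * ρ) := my_Wfn_pos d hα0 (mul_nonneg ha.le hρ0)
  have hptwise : ∀ y ∈ B, (2 ^ p * 2)⁻¹ * Wfn d α (a * ρ) ≤ g y := by
    intro y hy
    obtain ⟨hy1, hy2⟩ := hy
    have hxy : ρ ≤ ‖x - y‖ := by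
      rw [← dist_eq_norm]; exact infDist_le_dist_of_mem hy2
    have hup : a * ‖x - y‖ ≤ a * ρ + 1 := by
      have hxy2 : ‖x - y‖ ≤ ρ + r₀ := by
        rw [← dist_eq_norm]
        calc dist x y ≤ dist x x₀ + dist x₀ y := dist_triangle _ _ _
          _ ≤ ρ + r₀ := add_le_add (le_of_eq hx₀d.symm) (mem_closedBall'.mp hy1)
      nlinarith [har₀, ha.le]
    have hlow : a * ρ ≤ a * ‖x - y‖ := mul_le_mul_of_nonneg_left hxy ha.le
    have hcomp := my_Wfn_comp d (r := a*ρ) (r' := a*‖x - y‖) (D := 1) hα0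
      (mul_nonneg ha.le hρ0) one_pos.le hlow hup
    rw [Real.one_rpow, ← hpdef] at hcomp
    rw [inv_mul_le_iff₀ (by positivity)]
    calc Wfn d α (a * ρ) ≤ 2 ^ p * (1 + 1) * Wfn d α (a * ‖x - y‖) := hcomp
      _ = 2 ^ p * 2 * g y := by rw [hgdef]; norm_num
  have hint1 : (2 ^ p * 2)⁻¹ * Wfn d α (a * ρ) * (μ B).toReal ≤ ∫ y in B, g y ∂μ :=
    by have := setIntegral_ge_of_const_le_real hBmeas (measure_ne_top μ B) hptwise hgint.integrableOn
       exact this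
  have hint2 : ∫ y in B, g y ∂μ ≤ ∫ y, g y ∂μ :=
    setIntegral_le_integral hgint (Filter.Eventually.of_forall hgnn)
  have hone : 1 ≤ (1 + t ^ (-s/α)) * r₀ ^ s := by
    have hts0 : 0 ≤ t ^ (-s/α) := Real.rpow_nonneg ht.le _
    rcases le_total (1/a) 1 with h | h
    · have hts_eq : t ^ (-s/α) = a ^ s := by
        rw [hadef, ← Real.rpow_mul ht.le]
        congr 1; ring
      rw [hr₀def, min_eq_left h, hts_eq]
      have hmul : a ^ s * (1/a) ^ s = 1 := by
        rw [← Real.mul_rpow ha.le (by positivity), mul_one_div_cancel ha.ne', Real.one_rpow]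
      nlinarith [Real.rpow_nonneg (show (0:ℝ) ≤ 1/a by positivity) s]
    · rw [hr₀def, min_eq_right h, Real.one_rpow]; linarith
  -- rewrite hfn
  rw [hfn]
  have hint_eq : ∫ y, wfn d α β s t (x - y) ∂μ
      = (t ^ (-(1:ℝ)/β) * (1 + t ^ (-s/α))) * ∫ y, g y ∂μ := by
    rw [← integral_const_mul]
    simp only [wfn, hgdef, hadef]
  rw [hint_eq]
  set T : ℝ := t ^ (-(1:ℝ)/β) with hTdef
  have hT : 0 < T := Real.rpow_pos_of_pos ht _
  set ts : ℝ := t ^ (-s/α) with htsdef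
  have hts0 : 0 ≤ ts := Real.rpow_nonneg ht.le _
  set I : ℝ := ∫ y, g y ∂μ with hIdef
  set c : ℝ := (2 ^ p * 2)⁻¹ with hcdef
  have hI1 : c * Wfn d α (a * ρ) * (Cund * r₀ ^ s) ≤ I := by
    calc c * Wfn d α (a * ρ) * (Cund * r₀ ^ s)
        ≤ c * Wfn d α (a * ρ) * (μ B).toReal :=
          mul_le_mul_of_nonneg_left hμBr (by positivity)
      _ ≤ ∫ y in B, g y ∂μ := hint1
      _ ≤ I := hint2
  have h2 : c * Wfn d α (a * ρ) * Cund ≤ (1 + ts) * I := by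
    calc c * Wfn d α (a * ρ) * Cund
        = c * Wfn d α (a * ρ) * Cund * 1 := (mul_one _).symm
      _ ≤ c * Wfn d α (a * ρ) * Cund * ((1 + ts) * r₀ ^ s) :=
          mul_le_mul_of_nonneg_left hone (by positivity)
      _ = (1 + ts) * (c * Wfn d α (a * ρ) * (Cund * r₀ ^ s)) := by ring
      _ ≤ (1 + ts) * I := mul_le_mul_of_nonneg_left hI1 (by positivity)
  have h3 : k * T * (c * Wfn d α (a * ρ) * Cund) ≤ k * T * ((1 + ts) * I) :=
    mul_le_mul_of_nonneg_left h2 (by positivity)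
  calc Cund * c * k * T * Wfn d α (a * ρ) = k * T * (c * Wfn d α (a * ρ) * Cund) := by ring
    _ ≤ k * T * ((1 + ts) * I) := h3
    _ = k * (T * (1 + ts) * I) := by ring
end

section
/- Let d be a positive integer, α ∈ (0,2), s ≥ 0, and let β > 0 satisfy 1/β + s/α < (d+α)/α. Define w_t(x) = t^{-1/β}(1 + t^{-s/α}) W(t^{-1/α}|x|) for t > 0 and x ∈ ℝ^d, where W(r) = log(e + r²)/(1 + r^{d+α}). Then for every x ∈ ℝ^d the map t ↦ w_t(x) is differentiable on (0,∞), and there exist constants R₀ > 0 and c₂ > 0, depending only on d, α, β and s, such that whenever t > 0 and x ∈ ℝ^d satisfy t^{-1/α}|x| ≥ R₀, one has ∂_t w_t(x) ≥ c₂ · t^{-1/β − 1} (1 + t^{-s/α}) W(t^{-1/α}|x|). -/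
open Set

lemma Wfn_hasDerivAt (d : ℕ) (α u : ℝ) (hq : 1 ≤ (d:ℝ) + α) (hu : 0 ≤ u) :
    HasDerivAt (Wfn d α)
      ((2*u/(Real.exp 1 + u^2) * (1 + u^((d:ℝ)+α)) -
        Real.log (Real.exp 1 + u^2) * (((d:ℝ)+α) * u^((d:ℝ)+α-1))) / (1 + u^((d:ℝ)+α))^2) u := by
  have hpos : (0:ℝ) < Real.exp 1 + u^2 := by positivity
  have hD : (1:ℝ) + u^((d:ℝ)+α) ≠ 0 := by
    have := Real.rpow_nonneg hu ((d:ℝ)+α); positivity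
  have hL : HasDerivAt (fun v : ℝ => Real.log (Real.exp 1 + v^2)) (2*u/(Real.exp 1 + u^2)) u := by
    have h0 : HasDerivAt (fun v : ℝ => Real.exp 1 + v^2) (2*u) u := by
      simpa using ((hasDerivAt_pow 2 u).const_add (Real.exp 1))
    exact h0.log hpos.ne'
  have hDd : HasDerivAt (fun v : ℝ => 1 + v^((d:ℝ)+α)) (((d:ℝ)+α) * u^((d:ℝ)+α-1)) u :=
    (Real.hasDerivAt_rpow_const (Or.inr hq)).const_add 1
  exact hL.div hDd hD

lemma wfn_hasDerivAt (d : ℕ) (α β s : ℝ) (hq : 1 ≤ (d:ℝ)+α) (t : ℝ) (ht : 0 < t)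
    (x : EuclideanSpace ℝ (Fin d)) :
    HasDerivAt (fun τ => wfn d α β s τ x)
      ((((-(1:ℝ)/β) * t^(-(1:ℝ)/β - 1)) * (1 + t^(-s/α)) + t^(-(1:ℝ)/β) * ((-s/α) * t^(-s/α - 1))) *
          Wfn d α (t^(-(1:ℝ)/α)*‖x‖)
        + (t^(-(1:ℝ)/β) * (1 + t^(-s/α))) *
          (((2*(t^(-(1:ℝ)/α)*‖x‖)/(Real.exp 1 + (t^(-(1:ℝ)/α)*‖x‖)^2) * (1 + (t^(-(1:ℝ)/α)*‖x‖)^((d:ℝ)+α)) -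
              Real.log (Real.exp 1 + (t^(-(1:ℝ)/α)*‖x‖)^2) * (((d:ℝ)+α) * (t^(-(1:ℝ)/α)*‖x‖)^((d:ℝ)+α-1))) /
                (1 + (t^(-(1:ℝ)/α)*‖x‖)^((d:ℝ)+α))^2)
          * ((-(1:ℝ)/α * t^(-(1:ℝ)/α-1)) * ‖x‖))) t := by
  have hf : HasDerivAt (fun τ : ℝ => τ^(-(1:ℝ)/β)) ((-(1:ℝ)/β) * t^(-(1:ℝ)/β - 1)) t :=
    Real.hasDerivAt_rpow_const (Or.inl ht.ne')
  have hg : HasDerivAt (fun τ : ℝ => 1 + τ^(-s/α)) ((-s/α) * t^(-s/α - 1)) t :=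
    (Real.hasDerivAt_rpow_const (Or.inl ht.ne')).const_add 1
  have hrd : HasDerivAt (fun τ : ℝ => τ^(-(1:ℝ)/α) * ‖x‖) ((-(1:ℝ)/α * t^(-(1:ℝ)/α-1)) * ‖x‖) t :=
    (Real.hasDerivAt_rpow_const (Or.inl ht.ne')).mul_const ‖x‖
  have hu : 0 ≤ t^(-(1:ℝ)/α) * ‖x‖ := by positivity
  have hW := (Wfn_hasDerivAt d α _ hq hu).comp t hrd
  exact (hf.mul hg).mul hW

lemma key_ineq (q ε r : ℝ) (hq : 0 < q) (hε : 0 < ε) (h1 : 1 ≤ r)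
    (h2 : Real.exp (8/ε) ≤ r^2) (h3 : 2*q/ε ≤ r^q) :
    (q - ε) * (Real.log (Real.exp 1 + r^2) * (1 + r^q)) ≤
      Real.log (Real.exp 1 + r^2) * (q * r^q) - (2*r^2/(Real.exp 1 + r^2)) * (1 + r^q) := by
  set L := Real.log (Real.exp 1 + r^2) with hLdef
  set P := r^q with hPdef
  have hr0 : (0:ℝ) < r := lt_of_lt_of_le one_pos h1
  have hP1 : 1 ≤ P := Real.one_le_rpow h1 hq.le
  have hEr : (0:ℝ) < Real.exp 1 + r^2 := by positivity
  have hL8 : 8/ε ≤ L := by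
    have h2' : Real.exp (8/ε) ≤ Real.exp 1 + r^2 := le_trans h2 (by nlinarith [Real.exp_pos 1])
    calc 8/ε = Real.log (Real.exp (8/ε)) := (Real.log_exp _).symm
    _ ≤ L := Real.log_le_log (Real.exp_pos _) h2'
  have hL0 : 0 ≤ L := le_trans (by positivity) hL8
  have hεP : 2*q ≤ P*ε := (div_le_iff₀ hε).mp h3
  have hfrac : 2*r^2/(Real.exp 1 + r^2) ≤ 2 := by
    rw [div_le_iff₀ hEr]; nlinarith [Real.exp_pos 1]
  have hmid : ε*P/2 ≤ ε*P - (q-ε) := by nlinarith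
  have ha : (8/ε)*(ε*P/2) ≤ L*(ε*P - (q-ε)) :=
    mul_le_mul hL8 hmid (by positivity) hL0
  have hb : (8/ε)*(ε*P/2) = 4*P := by field_simp; ring
  have hc : (2*r^2/(Real.exp 1 + r^2))*(1+P) ≤ 4*P := by
    have hfr0 : (0:ℝ) ≤ 2*r^2/(Real.exp 1 + r^2) := by positivity
    calc (2*r^2/(Real.exp 1 + r^2))*(1+P) ≤ 2*(1+P) :=
          mul_le_mul_of_nonneg_right hfrac (by linarith)
    _ ≤ 4*P := by linarith
  rw [hb] at ha
  nlinarith [ha, hc]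

lemma key2 (q ε r : ℝ) (hq : 0 < q) (hε : 0 < ε) (h1 : 1 ≤ r)
    (h2 : Real.exp (8/ε) ≤ r^2) (h3 : 2*q/ε ≤ r^q) :
    (q - ε) * (Real.log (Real.exp 1 + r^2) / (1 + r^q)) ≤
      -(r * ((2*r/(Real.exp 1 + r^2) * (1 + r^q) -
        Real.log (Real.exp 1 + r^2) * (q * r^(q-1))) / (1 + r^q)^2)) := by
  have hr0 : (0:ℝ) < r := lt_of_lt_of_le one_pos h1
  have hEr : (0:ℝ) < Real.exp 1 + r^2 := by positivity
  have hP0 : (0:ℝ) < r^q := Real.rpow_pos_of_pos hr0 q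
  have hD : (0:ℝ) < 1 + r^q := by linarith
  have hrq : r * r^(q-1) = r^q := by
    have h := Real.rpow_add hr0 1 (q-1)
    rw [show (1:ℝ) + (q-1) = q by ring, Real.rpow_one] at h
    exact h.symm
  have hid : -(r * ((2*r/(Real.exp 1 + r^2) * (1 + r^q) -
        Real.log (Real.exp 1 + r^2) * (q * r^(q-1))) / (1 + r^q)^2))
      = (Real.log (Real.exp 1 + r^2) * (q * r^q) - (2*r^2/(Real.exp 1 + r^2)) * (1 + r^q)) / (1 + r^q)^2 := by
    rw [← hrq]
    have hD' : ((1:ℝ) + r * r^(q-1)) ≠ 0 := by rw [hrq]; exact hD.ne'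
    field_simp
    ring
  have hid2 : (q - ε) * (Real.log (Real.exp 1 + r^2) / (1 + r^q))
      = ((q - ε) * (Real.log (Real.exp 1 + r^2) * (1 + r^q))) / (1 + r^q)^2 := by
    field_simp
  rw [hid, hid2]
  gcongr
  exact key_ineq q ε r hq hε h1 h2 h3


/-- The map `t ↦ w_t(x)` is differentiable on `(0,∞)`, and in the far
region `t^{-1/α}|x| ≥ R₀` its time derivative satisfies
`∂_t w_t(x) ≥ c₂ t^{-1/β-1}(1 + t^{-s/α}) W(t^{-1/α}|x|)`. -/
theorem stmt_7 (d : ℕ) (hd : 0 < d) (α β s : ℝ) (hα : α ∈ Ioo (0:ℝ) 2)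
    (hβ : 0 < β) (hs : 0 ≤ s) (hcrit : 1/β + s/α < ((d:ℝ) + α)/α) :
    (∀ x : EuclideanSpace ℝ (Fin d), ∀ t ∈ Ioi (0:ℝ),
      DifferentiableAt ℝ (fun τ => wfn d α β s τ x) t) ∧
    ∃ R₀ > (0:ℝ), ∃ c₂ > (0:ℝ), ∀ t > (0:ℝ), ∀ x : EuclideanSpace ℝ (Fin d),
      R₀ ≤ t ^ (-(1:ℝ)/α) * ‖x‖ →
      c₂ * t ^ (-(1:ℝ)/β - 1) * (1 + t ^ (-s/α)) * Wfn d α (t ^ (-(1:ℝ)/α) * ‖x‖) ≤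
        deriv (fun τ => wfn d α β s τ x) t := by
  obtain ⟨hα0, hα2⟩ := hα
  have hd1 : (1:ℝ) ≤ (d:ℝ) := by exact_mod_cast hd
  have hq1 : (1:ℝ) ≤ (d:ℝ) + α := by linarith
  have hq0 : (0:ℝ) < (d:ℝ) + α := by linarith
  constructor
  · intro x t ht
    exact (wfn_hasDerivAt d α β s hq1 t (mem_Ioi.mp ht) x).differentiableAt
  set δ := ((d:ℝ)+α)/α - (1/β + s/α) with hδdef
  have hδ : 0 < δ := by rw [hδdef]; linarith
  set ε := α*δ/2 with hεdef
  have hε : 0 < ε := by rw [hεdef]; positivity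
  clear_value ε
  clear_value δ
  refine ⟨max 1 (max (Real.exp (4/ε)) ((2*((d:ℝ)+α)/ε) ^ (((d:ℝ)+α)⁻¹))),
    lt_of_lt_of_le one_pos (le_max_left _ _), δ/2, half_pos hδ, ?_⟩
  intro t ht x hrR
  rw [(wfn_hasDerivAt d α β s hq1 t ht x).deriv]
  have e1 : t ^ (-(1:ℝ)/β - 1) = t ^ (-(1:ℝ)/β) / t := by rw [Real.rpow_sub ht, Real.rpow_one]
  have e2 : t ^ (-s/α - 1) = t ^ (-s/α) / t := by rw [Real.rpow_sub ht, Real.rpow_one]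
  have e3 : t ^ (-(1:ℝ)/α - 1) = t ^ (-(1:ℝ)/α) / t := by rw [Real.rpow_sub ht, Real.rpow_one]
  rw [e1, e2, e3]
  set u := t ^ (-(1:ℝ)/α) with hudef
  set A := t ^ (-(1:ℝ)/β) with hAdef
  set B := t ^ (-s/α) with hBdef
  set r := u * ‖x‖ with hrdef
  -- basic facts about r
  have h1r : (1:ℝ) ≤ r := le_trans (le_max_left _ _) hrR
  have hr0 : (0:ℝ) < r := lt_of_lt_of_le one_pos h1r
  have hrexp : Real.exp (4/ε) ≤ r :=
    le_trans (le_trans (le_max_left _ _) (le_max_right _ _)) hrR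
  have hrcb : (2*((d:ℝ)+α)/ε) ^ (((d:ℝ)+α)⁻¹) ≤ r :=
    le_trans (le_trans (le_max_right _ _) (le_max_right _ _)) hrR
  have h2 : Real.exp (8/ε) ≤ r^2 := by
    have he := Real.exp_pos (4/ε)
    have hmm : Real.exp (4/ε) * Real.exp (4/ε) ≤ r * r :=
      mul_le_mul hrexp hrexp he.le (le_trans he.le hrexp)
    rw [← Real.exp_add] at hmm
    rw [show (4/ε + 4/ε) = 8/ε by ring] at hmm
    nlinarith [hmm]
  have h3 : 2*((d:ℝ)+α)/ε ≤ r ^ ((d:ℝ)+α) := by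
    have ha : (0:ℝ) ≤ 2*((d:ℝ)+α)/ε := le_of_lt (div_pos (by linarith) hε)
    have hbase : (0:ℝ) ≤ (2*((d:ℝ)+α)/ε) ^ (((d:ℝ)+α)⁻¹) := Real.rpow_nonneg ha _
    have h := Real.rpow_le_rpow hbase hrcb hq0.le
    rwa [← Real.rpow_mul ha, inv_mul_cancel₀ hq0.ne', Real.rpow_one] at h
  have hRW := key2 ((d:ℝ)+α) ε r hq0 hε h1r h2 h3
  have hWfn : Wfn d α r = Real.log (Real.exp 1 + r^2) / (1 + r^((d:ℝ)+α)) := rfl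
  rw [hWfn]
  set L := Real.log (Real.exp 1 + r^2) with hLdef
  set D := 1 + r^((d:ℝ)+α) with hDdef
  set Wd := (2*r/(Real.exp 1 + r^2) * D - L*(((d:ℝ)+α) * r^((d:ℝ)+α-1)))/D^2 with hWddef
  clear_value Wd
  clear_value L D
  clear_value r
  clear_value u A B
  -- positivity facts
  have hB0 : 0 < B := by rw [hBdef]; exact Real.rpow_pos_of_pos ht _
  have hA0 : 0 < A := by rw [hAdef]; exact Real.rpow_pos_of_pos ht _
  have hG0 : (0:ℝ) < 1 + B := by linarith
  have hAt : 0 < A / t := div_pos hA0 ht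
  have hL0 : 0 ≤ L := by
    rw [hLdef]
    exact Real.log_nonneg (le_trans (Real.one_le_exp zero_le_one)
      (le_add_of_nonneg_right (sq_nonneg r)))
  have hD0 : (0:ℝ) < D := by
    rw [hDdef]
    have := Real.rpow_pos_of_pos hr0 ((d:ℝ)+α)
    linarith
  have hWv0 : 0 ≤ L / D := div_nonneg hL0 hD0.le
  -- rewrite the constant in hRW
  have hqe : ((d:ℝ)+α) - ε = α*(δ/2) + α/β + s := by
    rw [hεdef, hδdef]; field_simp; ring
  rw [hqe] at hRW
  -- the main pointwise inequality
  have hfinal : δ/2 * ((1 + B) * (L/D)) ≤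
      (-(1:ℝ)/β) * ((1+B) * (L/D)) - (s/α) * (B * (L/D)) + (1+B) * (-(r*Wd)/α) := by
    rw [← sub_nonneg]
    have hid : (-(1:ℝ)/β) * ((1+B)*(L/D)) - (s/α)*(B*(L/D)) + (1+B)*(-(r*Wd)/α) - δ/2 * ((1+B)*(L/D))
        = ((-(α/β)) * ((1+B)*(L/D)) - s*(B*(L/D)) + (1+B)*(-(r*Wd)) - α*(δ/2)*((1+B)*(L/D))) / α := by
      field_simp
    rw [hid]
    apply div_nonneg _ hα0.le
    have hh1 : (1+B) * ((α*(δ/2) + α/β + s) * (L/D)) ≤ (1+B) * (-(r*Wd)) :=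
      mul_le_mul_of_nonneg_left hRW hG0.le
    have hh2 : s * (B * (L/D)) ≤ s * ((1+B) * (L/D)) :=
      mul_le_mul_of_nonneg_left (mul_le_mul_of_nonneg_right (by linarith : B ≤ 1 + B) hWv0) hs
    clear hrR hrexp hrcb h2 h3 e1 e2 e3 hcrit hWfn hrdef hLdef hDdef hWddef hqe hRW
    linarith [hh1, hh2]
  rw [show δ/2 * (A/t) * (1+B) * (L/D) = (A/t) * (δ/2 * ((1+B)*(L/D))) from by ring]
  refine le_trans (mul_le_mul_of_nonneg_left hfinal hAt.le) (le_of_eq ?_)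
  rw [hrdef]
  ring
end

section
/- Let d be a positive integer, α ∈ (0,2), s ≥ 0, and let β > 0 satisfy 1/β + s/α < (d+α)/α. Define w_t(x) = t^{-1/β}(1 + t^{-s/α}) W(t^{-1/α}|x|), where W(r) = log(e + r²)/(1 + r^{d+α}). Let c₁ > 0 and let D : ℝ^d → ℝ be any function satisfying D(u) ≤ c₁/(1 + |u|^{d+α}) for all u with |u| ≥ 2. Then there exists R₁ ≥ 2, depending only on d, α, β, s and c₁, such that for all t > 0 and x ∈ ℝ^d with t^{-1/α}|x| ≥ R₁, ∂_t w_t(x) − t^{-1/β − 1}(1 + t^{-s/α}) D(t^{-1/α} x) ≥ 0. -/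
open Set

set_option maxHeartbeats 1000000 in
/-- Far-region supersolution inequality: if `D` (playing the role of
`Δ_α V`) satisfies `D(u) ≤ c₁/(1+|u|^{d+α})` for `|u| ≥ 2`, then there is `R₁ ≥ 2` such
that `∂_t w_t(x) - t^{-1/β-1}(1+t^{-s/α}) D(t^{-1/α} x) ≥ 0` whenever
`t^{-1/α}|x| ≥ R₁`. -/
theorem stmt_8 (d : ℕ) (hd : 0 < d) (α β s : ℝ) (hα : α ∈ Ioo (0:ℝ) 2)
    (hβ : 0 < β) (hs : 0 ≤ s) (hcrit : 1/β + s/α < ((d:ℝ) + α)/α)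
    (c₁ : ℝ) (hc₁ : 0 < c₁) (D : EuclideanSpace ℝ (Fin d) → ℝ)
    (hD : ∀ u : EuclideanSpace ℝ (Fin d), 2 ≤ ‖u‖ →
      D u ≤ c₁ / (1 + ‖u‖ ^ ((d:ℝ) + α))) :
    ∃ R₁ : ℝ, 2 ≤ R₁ ∧ ∀ t > (0:ℝ), ∀ x : EuclideanSpace ℝ (Fin d),
      R₁ ≤ t ^ (-(1:ℝ)/α) * ‖x‖ →
      0 ≤ deriv (fun τ => wfn d α β s τ x) t -
          t ^ (-(1:ℝ)/β - 1) * (1 + t ^ (-s/α)) * D ((t ^ (-(1:ℝ)/α)) • x) := by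
  obtain ⟨hα0, hα2⟩ := hα
  have hd1 : (1:ℝ) ≤ (d:ℝ) := by exact_mod_cast hd
  set δ : ℝ := (((d:ℝ) + α)/α - (1/β + s/α))/2 with hδdef
  have hδ : 0 < δ := by simp only [hδdef]; linarith
  set K : ℝ := (2/α + c₁)/δ with hKdef
  have hK : 0 < K := by positivity
  refine ⟨max (max 2 (((d:ℝ)+α)/(α*δ))) (Real.exp K), le_trans (le_max_left 2 _) (le_max_left _ _), ?_⟩
  intro t ht x hx
  set r : ℝ := ‖x‖ with hrdef
  set ρ : ℝ := t ^ (-(1:ℝ)/α) * r with hρdef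
  have hρ2 : (2:ℝ) ≤ ρ := le_trans (le_trans (le_max_left 2 _) (le_max_left _ _)) hx
  have hρ0 : (0:ℝ) < ρ := by linarith
  have hρ1 : (1:ℝ) ≤ ρ := by linarith
  have htα : (0:ℝ) < t ^ (-(1:ℝ)/α) := Real.rpow_pos_of_pos ht _
  have hr0 : (0:ℝ) < r := by
    rcases lt_or_ge 0 r with h | h
    · exact h
    · exfalso; nlinarith
  set L : ℝ := Real.log (Real.exp 1 + ρ ^ 2) with hLdef
  set E : ℝ := Real.exp 1 + ρ ^ 2 with hEdef
  set P : ℝ := ρ ^ ((d:ℝ) + α) with hPdef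
  set M : ℝ := 1 + P with hMdef
  have hE0 : (0:ℝ) < E := by
    have := Real.exp_pos 1; simp only [hEdef]; nlinarith
  have hP0 : (0:ℝ) < P := Real.rpow_pos_of_pos hρ0 _
  have hM0 : (0:ℝ) < M := by simp only [hMdef]; linarith
  have hρP : ρ ≤ P := by
    have := Real.rpow_le_rpow_of_exponent_le hρ1 (show (1:ℝ) ≤ (d:ℝ) + α by linarith)
    rwa [Real.rpow_one] at this
  have hEρ : ρ ^ 2 ≤ E := by
    simp only [hEdef]; nlinarith [Real.exp_pos 1]
  -- lower bounds coming from the choice of R₁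
  have hMlb : ((d:ℝ)+α)/(α*δ) ≤ M := by
    have h1 : ((d:ℝ)+α)/(α*δ) ≤ ρ :=
      le_trans (le_trans (le_max_right 2 _) (le_max_left _ _)) hx
    simp only [hMdef]; linarith
  have hLlb : K ≤ L := by
    have h1 : Real.exp K ≤ ρ := le_trans (le_max_right _ _) hx
    have h2 : K ≤ Real.log ρ := (Real.le_log_iff_exp_le hρ0).2 h1
    have hEbig : ρ ≤ Real.exp 1 + ρ^2 := by nlinarith [Real.exp_pos 1]
    have h3 : Real.log ρ ≤ Real.log E := Real.log_le_log hρ0 (le_trans hEbig hEdef.ge)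
    rw [← hLdef] at h3
    linarith
  have hL0 : (0:ℝ) < L := lt_of_lt_of_le hK hLlb
  set θ : ℝ := t ^ (-s/α) with hθdef
  have hθ0 : (0:ℝ) < θ := Real.rpow_pos_of_pos ht _
  set T : ℝ := t ^ (-(1:ℝ)/β - 1) with hTdef
  have hT0 : (0:ℝ) < T := Real.rpow_pos_of_pos ht _
  -- derivative computation
  have h1 : HasDerivAt (fun τ : ℝ => τ ^ (-(1:ℝ)/β)) ((-(1:ℝ)/β) * t ^ (-(1:ℝ)/β - 1)) t :=
    Real.hasDerivAt_rpow_const (Or.inl ht.ne')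
  have hB : HasDerivAt (fun τ : ℝ => 1 + τ ^ (-s/α)) ((-s/α) * t ^ (-s/α - 1)) t :=
    (Real.hasDerivAt_rpow_const (Or.inl ht.ne')).const_add 1
  have h3 : HasDerivAt (fun τ : ℝ => τ ^ (-(1:ℝ)/α) * r) ((-(1:ℝ)/α) * t ^ (-(1:ℝ)/α - 1) * r) t :=
    (Real.hasDerivAt_rpow_const (Or.inl ht.ne')).mul_const r
  have hnum : HasDerivAt (fun y : ℝ => Real.log (Real.exp 1 + y ^ 2))
      (((2:ℕ) * ρ ^ (2-1)) / (Real.exp 1 + ρ ^ 2)) ρ :=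
    ((hasDerivAt_pow 2 ρ).const_add (Real.exp 1)).log
      (by show Real.exp 1 + ρ ^ 2 ≠ 0; positivity)
  have hden : HasDerivAt (fun y : ℝ => 1 + y ^ ((d:ℝ) + α))
      (((d:ℝ)+α) * ρ ^ (((d:ℝ)+α) - 1)) ρ :=
    (Real.hasDerivAt_rpow_const (Or.inl hρ0.ne')).const_add 1
  have hW : HasDerivAt (Wfn d α)
      (((((2:ℕ) * ρ ^ (2-1)) / E) * M - L * (((d:ℝ)+α) * ρ ^ (((d:ℝ)+α) - 1))) / M ^ 2) ρ := by
    exact hnum.div hden (by show (1:ℝ) + ρ ^ ((d:ℝ)+α) ≠ 0; positivity)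
  have hC : HasDerivAt (fun τ : ℝ => Wfn d α (τ ^ (-(1:ℝ)/α) * r))
      ((((((2:ℕ) * ρ ^ (2-1)) / E) * M - L * (((d:ℝ)+α) * ρ ^ (((d:ℝ)+α) - 1))) / M ^ 2) *
        ((-(1:ℝ)/α) * t ^ (-(1:ℝ)/α - 1) * r)) t := by
    exact hW.comp t h3
  have hABC : HasDerivAt (fun τ : ℝ => wfn d α β s τ x)
      ((((-(1:ℝ)/β) * t ^ (-(1:ℝ)/β - 1)) * (1 + t ^ (-s/α)) +
        t ^ (-(1:ℝ)/β) * ((-s/α) * t ^ (-s/α - 1))) * Wfn d α (t ^ (-(1:ℝ)/α) * r) +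
        (t ^ (-(1:ℝ)/β) * (1 + t ^ (-s/α))) *
        ((((((2:ℕ) * ρ ^ (2-1)) / E) * M - L * (((d:ℝ)+α) * ρ ^ (((d:ℝ)+α) - 1))) / M ^ 2) *
          ((-(1:ℝ)/α) * t ^ (-(1:ℝ)/α - 1) * r))) t := by
    exact (h1.mul hB).mul hC
  have hd' : deriv (fun τ : ℝ => wfn d α β s τ x) t =
      (((-(1:ℝ)/β) * t ^ (-(1:ℝ)/β - 1)) * (1 + t ^ (-s/α)) +
        t ^ (-(1:ℝ)/β) * ((-s/α) * t ^ (-s/α - 1))) * Wfn d α (t ^ (-(1:ℝ)/α) * r) +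
        (t ^ (-(1:ℝ)/β) * (1 + t ^ (-s/α))) *
        ((((((2:ℕ) * ρ ^ (2-1)) / E) * M - L * (((d:ℝ)+α) * ρ ^ (((d:ℝ)+α) - 1))) / M ^ 2) *
          ((-(1:ℝ)/α) * t ^ (-(1:ℝ)/α - 1) * r)) := hABC.deriv
  -- rpow bookkeeping
  have ht1 : t ^ (-(1:ℝ)/β) = T * t := by
    rw [hTdef, ← Real.rpow_add_one ht.ne']
    congr 1; ring
  have ht2 : t ^ (-s/α - 1) = θ / t := by
    rw [hθdef, Real.rpow_sub ht, Real.rpow_one]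
  have ht3 : (-(1:ℝ)/α) * t ^ (-(1:ℝ)/α - 1) * r = (-(1:ℝ)/α) * (ρ / t) := by
    rw [hρdef, Real.rpow_sub ht, Real.rpow_one]; ring
  have hP1 : ρ ^ (((d:ℝ)+α) - 1) = P / ρ := by
    rw [hPdef, Real.rpow_sub hρ0, Real.rpow_one]
  have hWval : Wfn d α (t ^ (-(1:ℝ)/α) * r) = L / M := by
    rw [Wfn, ← hρdef, ← hEdef, ← hLdef, ← hPdef, ← hMdef]
  -- the D bound
  have hnorm : ‖(t ^ (-(1:ℝ)/α)) • x‖ = ρ := by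
    rw [norm_smul, Real.norm_eq_abs, abs_of_pos htα, hρdef, hrdef]
  have hDle : D ((t ^ (-(1:ℝ)/α)) • x) ≤ c₁ / M := by
    have := hD _ (by rw [hnorm]; exact hρ2)
    rwa [hnorm, ← hPdef, ← hMdef] at this
  -- core inequality
  set G : ℝ := β*((d:ℝ)+α)*P - α*M - s*β*M with hGdef
  have hGe : G = 2*δ*α*β*M - β*((d:ℝ)+α) := by
    rw [hGdef, hMdef, hδdef]
    field_simp
    ring
  have hβd : β*((d:ℝ)+α) ≤ δ*α*β*M := by
    calc β*((d:ℝ)+α) = (δ*α*β) * (((d:ℝ)+α)/(α*δ)) := by field_simp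
    _ ≤ (δ*α*β) * M := mul_le_mul_of_nonneg_left hMlb (by positivity)
    _ = δ*α*β*M := by ring
  have hGlb : δ*α*β*M ≤ G := by rw [hGe]; linarith
  have hG0 : (0:ℝ) ≤ δ*α*β*M := by positivity
  have key' : (2*β + α*β*c₁) * M ≤ L * G := by
    have h1 : K * (δ*α*β*M) ≤ L * G := mul_le_mul hLlb hGlb hG0 hL0.le
    have h2 : K * (δ*α*β*M) = (2*β + α*β*c₁) * M := by
      rw [hKdef]; field_simp
    linarith
  set NUM : ℝ := (1+θ)*(β*L*E*((d:ℝ)+α)*P - α*L*E*M - 2*β*ρ^2*M - α*β*c₁*E*M)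
      - β*s*θ*L*E*M with hNUMdef
  have hNUM : (0:ℝ) ≤ NUM := by
    have f2 : (1+θ)*(E*((2*β + α*β*c₁) * M)) ≤ (1+θ)*(E*(L*G)) :=
      mul_le_mul_of_nonneg_left (mul_le_mul_of_nonneg_left key' hE0.le) (by positivity)
    have f3 : (0:ℝ) ≤ s*β*E*L*M := by positivity
    have f4 : (0:ℝ) ≤ 2*β*(1+θ)*M*(E - ρ^2) := by
      have h10 : (0:ℝ) ≤ E - ρ^2 := by linarith
      positivity
    have hid : NUM = ((1+θ)*(E*(L*G)) - (1+θ)*(E*((2*β + α*β*c₁) * M)))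
        + 2*β*(1+θ)*M*(E - ρ^2) + s*β*E*L*M := by
      rw [hNUMdef, hGdef]; ring
    rw [hid]
    linarith only [f2, f3, f4]
  -- putting it together
  have hArew : deriv (fun τ : ℝ => wfn d α β s τ x) t =
      T * NUM / (α*β*E*M^2) + T * (1 + θ) * (c₁ / M) := by
    rw [hd', hWval, ht2, ht3, hP1, ht1, ← hTdef, ← hθdef, hNUMdef]
    field_simp
    ring
  have hpos : (0:ℝ) ≤ T * NUM / (α*β*E*M^2) := by
    apply div_nonneg (mul_nonneg hT0.le hNUM)
    positivity
  have hstep : T * (1 + θ) * D ((t ^ (-(1:ℝ)/α)) • x) ≤ T * (1 + θ) * (c₁ / M) :=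
    mul_le_mul_of_nonneg_left hDle (by positivity)
  rw [hArew]
  linarith only [hpos, hstep]
end
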